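/- For α ∈ (0,2), α ≠ 1, let η{j} = (α/Γ(2-α)) · Γ(j-α+1)/Γ(j+2) for j ≥ 1. Then η is a probability measure on the positive integers, and its generating function satisfies φ_η(s) = Σ_{j≥1} η{j} s^j = 1 + ((1-s)^α - (1-s)) / ((α-1) s) for s ∈ (0,1). -/

import Mathlib

open Real Filter

namespace Stmt5Aux

/-- `w α j` is `η (j+1)`. -/
noncomputable def w (α : ℝ) (j : ℕ) : ℝ :=
  α / Real.Gamma (2 - α) * (Real.Gamma ((j : ℝ) + 2 - α) / Real.Gamma ((j : ℝ) + 3))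

variable {α : ℝ}

lemma arg_pos (hα2 : α < 2) (j : ℕ) : (0:ℝ) < (j : ℝ) + 2 - α := by
  have : (0:ℝ) ≤ (j : ℝ) := Nat.cast_nonneg j
  linarith

lemma w_pos (hα : 0 < α) (hα2 : α < 2) (j : ℕ) : 0 < w α j := by
  have h1 : 0 < Real.Gamma (2 - α) := Real.Gamma_pos_of_pos (by linarith)
  have h2 : 0 < Real.Gamma ((j : ℝ) + 2 - α) := Real.Gamma_pos_of_pos (arg_pos hα2 j)
  have h3 : 0 < Real.Gamma ((j : ℝ) + 3) := Real.Gamma_pos_of_pos (by positivity)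
  exact mul_pos (div_pos hα h1) (div_pos h2 h3)

lemma w_rec (hα2 : α < 2) (j : ℕ) :
    w α (j + 1) * ((j : ℝ) + 3) = w α j * ((j : ℝ) + 2 - α) := by
  have hG1 : Real.Gamma ((j : ℝ) + 3 - α) = ((j:ℝ) + 2 - α) * Real.Gamma ((j:ℝ) + 2 - α) := by
    have := Real.Gamma_add_one (s := (j:ℝ) + 2 - α) (arg_pos hα2 j).ne'
    rw [← this]; ring_nf
  have hG2 : Real.Gamma ((j : ℝ) + 4) = ((j:ℝ) + 3) * Real.Gamma ((j:ℝ) + 3) := by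
    have := Real.Gamma_add_one (s := (j:ℝ) + 3) (by positivity)
    rw [← this]; ring_nf
  have h3 : Real.Gamma ((j : ℝ) + 3) ≠ 0 := (Real.Gamma_pos_of_pos (by positivity)).ne'
  have h4 : ((j:ℝ) + 3) ≠ 0 := by positivity
  unfold w
  have hc1 : ((j + 1 : ℕ) : ℝ) + 2 - α = (j : ℝ) + 3 - α := by push_cast; ring
  have hc2 : ((j + 1 : ℕ) : ℝ) + 3 = (j : ℝ) + 4 := by push_cast; ring
  rw [hc1, hc2, hG1, hG2]
  have h2 : Real.Gamma (2 - α) ≠ 0 := (Real.Gamma_pos_of_pos (by linarith)).ne'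
  generalize Real.Gamma ((j:ℝ) + 2 - α) = G1
  generalize hg3 : Real.Gamma ((j:ℝ) + 3) = G3
  generalize hg2 : Real.Gamma (2 - α) = G2
  rw [hg3] at h3
  rw [hg2] at h2
  field_simp

lemma Gamma_two : Real.Gamma (2:ℝ) = 1 := by
  rw [show (2:ℝ) = 1 + 1 by norm_num, Real.Gamma_add_one one_ne_zero, Real.Gamma_one, mul_one]

lemma Gamma_three : Real.Gamma (3:ℝ) = 2 := by
  rw [show (3:ℝ) = 2 + 1 by norm_num, Real.Gamma_add_one two_ne_zero, Gamma_two, mul_one]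

lemma w_zero (hα : 0 < α) (hα2 : α < 2) : w α 0 = α / 2 := by
  have h1 : Real.Gamma (2 - α) ≠ 0 := (Real.Gamma_pos_of_pos (by linarith)).ne'
  unfold w
  have hc : ((0:ℕ):ℝ) + 2 - α = 2 - α := by push_cast; ring
  have hc2 : ((0:ℕ):ℝ) + 3 = 3 := by push_cast; ring
  rw [hc, hc2, Gamma_three]
  field_simp

lemma w_le (hα : 0 < α) (hα2 : α < 2) (j : ℕ) : w α j ≤ α / 2 := by
  induction j with
  | zero => rw [w_zero hα hα2]
  | succ n ih =>
      have h4 : (0:ℝ) < (n:ℝ) + 3 := by positivity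
      have := w_rec (α := α) hα2 n
      have hwn := w_pos hα hα2 n
      have : w α (n+1) = w α n * (((n:ℝ) + 2 - α) / ((n:ℝ) + 3)) := by
        field_simp at this ⊢
        linarith [this]
      rw [this]
      have hle : ((n:ℝ) + 2 - α) / ((n:ℝ) + 3) ≤ 1 := by
        rw [div_le_one h4]; linarith
      calc w α n * (((n:ℝ) + 2 - α) / ((n:ℝ) + 3)) ≤ w α n * 1 := by
            apply mul_le_mul_of_nonneg_left hle hwn.le
        _ = w α n := mul_one _
        _ ≤ α / 2 := ih

/-- The telescoping quantity. -/
noncomputable def Q (α : ℝ) (n : ℕ) : ℝ :=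
  Real.Gamma ((n : ℝ) + 2 - α) / Real.Gamma ((n : ℝ) + 2)

lemma Q_pos (hα2 : α < 2) (n : ℕ) : 0 < Q α n :=
  div_pos (Real.Gamma_pos_of_pos (arg_pos hα2 n)) (Real.Gamma_pos_of_pos (by positivity))

lemma Q_sub (hα : 0 < α) (hα2 : α < 2) (n : ℕ) :
    Q α n - Q α (n + 1) = Real.Gamma (2 - α) * w α n := by
  have h2 : Real.Gamma (2 - α) ≠ 0 := (Real.Gamma_pos_of_pos (by linarith)).ne'
  have hG1 : Real.Gamma ((n : ℝ) + 3 - α) = ((n:ℝ) + 2 - α) * Real.Gamma ((n:ℝ) + 2 - α) := by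
    have := Real.Gamma_add_one (s := (n:ℝ) + 2 - α) (arg_pos hα2 n).ne'
    rw [← this]; ring_nf
  have hG2 : Real.Gamma ((n : ℝ) + 3) = ((n:ℝ) + 2) * Real.Gamma ((n:ℝ) + 2) := by
    have := Real.Gamma_add_one (s := (n:ℝ) + 2) (by positivity)
    rw [← this]; ring_nf
  have hc1 : ((n + 1 : ℕ) : ℝ) + 2 - α = (n : ℝ) + 3 - α := by push_cast; ring
  have hc2 : ((n + 1 : ℕ) : ℝ) + 2 = (n : ℝ) + 3 := by push_cast; ring
  unfold Q w
  rw [hc1, hc2, hG1, hG2]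
  have h3 : Real.Gamma ((n:ℝ) + 2) ≠ 0 := (Real.Gamma_pos_of_pos (by positivity)).ne'
  have h4 : ((n:ℝ) + 2) ≠ 0 := by positivity
  generalize Real.Gamma ((n:ℝ) + 2 - α) = G1
  generalize hg3 : Real.Gamma ((n:ℝ) + 2) = G3
  generalize hg2 : Real.Gamma (2 - α) = G2
  rw [hg3] at h3
  rw [hg2] at h2
  field_simp
  ring

lemma Q_le (hα : 0 < α) (hα2 : α < 2) (n : ℕ) (hn : 1 ≤ n) :
    Q α n ≤ ((n:ℝ)) ^ (-(α/2)) := by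
  have hn0 : (0:ℝ) < (n:ℝ) := by exact_mod_cast hn
  have hcvx := Real.convexOn_log_Gamma
  have hmem1 : (n:ℝ) ∈ Set.Ioi (0:ℝ) := hn0
  have hmem2 : (n:ℝ) + 2 ∈ Set.Ioi (0:ℝ) := by simp; linarith
  have ha : (0:ℝ) ≤ α/2 := by linarith
  have hb : (0:ℝ) ≤ 1 - α/2 := by linarith
  have hab : α/2 + (1 - α/2) = 1 := by ring
  have hkey := hcvx.2 hmem1 hmem2 ha hb hab
  have harg : (α/2) • ((n:ℝ)) + (1 - α/2) • ((n:ℝ) + 2) = (n:ℝ) + 2 - α := by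
    simp [smul_eq_mul]; ring
  rw [harg] at hkey
  simp only [Function.comp_apply, smul_eq_mul] at hkey
  -- exponentiate
  have hpos1 : 0 < Real.Gamma ((n:ℝ)) := Real.Gamma_pos_of_pos hn0
  have hpos2 : 0 < Real.Gamma ((n:ℝ) + 2) := Real.Gamma_pos_of_pos (by linarith)
  have hpos3 : 0 < Real.Gamma ((n:ℝ) + 2 - α) := Real.Gamma_pos_of_pos (arg_pos hα2 n)
  have hexp : Real.Gamma ((n:ℝ) + 2 - α) ≤
      Real.Gamma ((n:ℝ)) ^ (α/2) * Real.Gamma ((n:ℝ) + 2) ^ (1 - α/2) := by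
    have h := Real.exp_le_exp.mpr hkey
    rw [Real.exp_log hpos3, Real.exp_add] at h
    rw [Real.rpow_def_of_pos hpos1, Real.rpow_def_of_pos hpos2,
      mul_comm (Real.log (Real.Gamma ((n:ℝ)))) (α/2),
      mul_comm (Real.log (Real.Gamma ((n:ℝ) + 2))) (1 - α/2)]
    exact h
  have hQ : Q α n ≤ (Real.Gamma ((n:ℝ)) / Real.Gamma ((n:ℝ) + 2)) ^ (α/2) := by
    unfold Q
    rw [Real.div_rpow hpos1.le hpos2.le]
    rw [div_le_div_iff₀ hpos2 (Real.rpow_pos_of_pos hpos2 _)]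
    calc Real.Gamma ((n:ℝ) + 2 - α) * Real.Gamma ((n:ℝ) + 2) ^ (α/2)
        ≤ (Real.Gamma ((n:ℝ)) ^ (α/2) * Real.Gamma ((n:ℝ) + 2) ^ (1 - α/2)) *
            Real.Gamma ((n:ℝ) + 2) ^ (α/2) := by
          apply mul_le_mul_of_nonneg_right hexp (Real.rpow_nonneg hpos2.le _)
      _ = Real.Gamma ((n:ℝ)) ^ (α/2) * Real.Gamma ((n:ℝ) + 2) := by
          rw [mul_assoc, ← Real.rpow_add hpos2]
          norm_num
  have hGn2 : Real.Gamma ((n:ℝ) + 2) = ((n:ℝ) + 1) * ((n:ℝ)) * Real.Gamma ((n:ℝ)) := by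
    have h1 : Real.Gamma ((n:ℝ) + 2) = ((n:ℝ) + 1) * Real.Gamma ((n:ℝ) + 1) := by
      have := Real.Gamma_add_one (s := (n:ℝ) + 1) (by positivity)
      rw [← this]; ring_nf
    have h2 : Real.Gamma ((n:ℝ) + 1) = (n:ℝ) * Real.Gamma ((n:ℝ)) :=
      Real.Gamma_add_one hn0.ne'
    rw [h1, h2]; ring
  have hdiv : Real.Gamma ((n:ℝ)) / Real.Gamma ((n:ℝ) + 2) = 1 / (((n:ℝ) + 1) * (n:ℝ)) := by
    rw [hGn2]
    field_simp
  calc Q α n ≤ (Real.Gamma ((n:ℝ)) / Real.Gamma ((n:ℝ) + 2)) ^ (α/2) := hQ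
    _ = (1 / (((n:ℝ) + 1) * (n:ℝ))) ^ (α/2) := by rw [hdiv]
    _ ≤ (1 / (n:ℝ)) ^ (α/2) := by
        apply Real.rpow_le_rpow (by positivity) _ (by linarith)
        apply div_le_div_of_nonneg_left one_pos.le hn0
        nlinarith
    _ = ((n:ℝ)) ^ (-(α/2)) := by
        rw [one_div, ← Real.rpow_neg_one, ← Real.rpow_mul hn0.le]
        norm_num

lemma Q_tendsto (hα : 0 < α) (hα2 : α < 2) :
    Tendsto (fun n : ℕ => Q α n) atTop (nhds 0) := by
  have h1 : Tendsto (fun n : ℕ => ((n:ℝ)) ^ (-(α/2))) atTop (nhds 0) :=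
    (tendsto_rpow_neg_atTop (by linarith)).comp tendsto_natCast_atTop_atTop
  apply squeeze_zero' (Eventually.of_forall fun n => (Q_pos hα2 n).le) _ h1
  filter_upwards [eventually_ge_atTop 1] with n hn
  exact Q_le hα hα2 n hn

lemma hasSum_w (hα : 0 < α) (hα2 : α < 2) : HasSum (w α) 1 := by
  have hG : (0:ℝ) < Real.Gamma (2 - α) := Real.Gamma_pos_of_pos (by linarith)
  have hpart : ∀ n : ℕ, ∑ j ∈ Finset.range n, Real.Gamma (2 - α) * w α j = Q α 0 - Q α n := by
    intro n
    rw [← Finset.sum_range_sub' (Q α) n]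
    exact Finset.sum_congr rfl fun j _ => (Q_sub hα hα2 j).symm
  have hQ0 : Q α 0 = Real.Gamma (2 - α) := by
    unfold Q
    norm_num [Gamma_two]
  have hsummable : Summable (fun j => Real.Gamma (2 - α) * w α j) := by
    apply summable_of_sum_range_le (c := Q α 0)
    · intro n; exact (mul_pos hG (w_pos hα hα2 n)).le
    · intro n; rw [hpart n]
      have := (Q_pos (α := α) hα2 n).le
      linarith
  have htendsto1 : Tendsto (fun n => ∑ j ∈ Finset.range n, Real.Gamma (2 - α) * w α j)
      atTop (nhds (∑' j, Real.Gamma (2 - α) * w α j)) :=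
    hsummable.hasSum.tendsto_sum_nat
  have htendsto2 : Tendsto (fun n => ∑ j ∈ Finset.range n, Real.Gamma (2 - α) * w α j)
      atTop (nhds (Q α 0)) := by
    have : Tendsto (fun n : ℕ => Q α 0 - Q α n) atTop (nhds (Q α 0 - 0)) :=
      tendsto_const_nhds.sub (Q_tendsto hα hα2)
    rw [sub_zero] at this
    exact this.congr fun n => (hpart n).symm
  have heq : ∑' j, Real.Gamma (2 - α) * w α j = Q α 0 :=
    tendsto_nhds_unique htendsto1 htendsto2
  have h2 : HasSum (fun j => Real.Gamma (2 - α) * w α j) (Real.Gamma (2 - α) * 1) := by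
    convert hsummable.hasSum using 1
    rw [mul_one, heq, hQ0]
  exact (hasSum_mul_left_iff hG.ne').mp h2

/-- The key series (α-1)·Σ w_j t^{j+2}. -/
noncomputable def S (α : ℝ) (t : ℝ) : ℝ := ∑' j : ℕ, (α - 1) * w α j * t ^ (j + 2)

lemma summable_aux {r : ℝ} (hr : |r| < 1) :
    Summable (fun j : ℕ => ((j:ℝ) + 2) * r ^ (j + 1)) := by
  have h1 : Summable (fun n : ℕ => (n:ℝ) ^ 1 * r ^ n) :=
    summable_pow_mul_geometric_of_norm_lt_one 1 (by rwa [Real.norm_eq_abs])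
  have h2 : Summable (fun n : ℕ => r ^ n) :=
    summable_geometric_of_norm_lt_one (by rwa [Real.norm_eq_abs])
  have h3 : Summable (fun n : ℕ => ((n:ℝ) + 2) * r ^ n) := by
    have h := h1.add (h2.mul_left 2)
    exact h.congr fun n => by push_cast; ring
  exact (h3.mul_left r).congr fun n => by ring

lemma g'_bound (hα : 0 < α) (hα2 : α < 2) {z r : ℝ} (hz : |z| ≤ r) (j : ℕ) :
    ‖(α - 1) * w α j * ((j:ℝ) + 2) * z ^ (j + 1)‖ ≤ |α - 1| * (((j:ℝ) + 2) * r ^ (j + 1)) := by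
  have hwpos := w_pos hα hα2 j
  have hwle : w α j ≤ 1 := (w_le hα hα2 j).trans (by linarith)
  have hzp : |z| ^ (j + 1) ≤ r ^ (j + 1) := pow_le_pow_left₀ (abs_nonneg z) hz _
  have hj2 : (0:ℝ) < (j:ℝ) + 2 := by positivity
  rw [Real.norm_eq_abs, abs_mul, abs_mul, abs_mul, abs_pow, abs_of_pos hwpos, abs_of_pos hj2]
  have b1 : w α j * |z| ^ (j + 1) ≤ 1 * r ^ (j + 1) :=
    mul_le_mul hwle hzp (by positivity) one_pos.le
  have hnn : (0:ℝ) ≤ |α - 1| * ((j:ℝ) + 2) := by positivity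
  have := mul_le_mul_of_nonneg_left b1 hnn
  nlinarith [this]

lemma summable_g' (hα : 0 < α) (hα2 : α < 2) {y : ℝ} (hy : |y| < 1) :
    Summable (fun j : ℕ => (α - 1) * w α j * ((j:ℝ) + 2) * y ^ (j + 1)) := by
  apply Summable.of_norm_bounded
    ((summable_aux (r := |y|) (by rwa [abs_abs])).mul_left (|α - 1|))
  exact fun j => g'_bound hα hα2 le_rfl j

lemma summable_g (hα : 0 < α) (hα2 : α < 2) {y : ℝ} (hy : |y| < 1) :
    Summable (fun j : ℕ => (α - 1) * w α j * y ^ (j + 2)) := by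
  have hgeo : Summable (fun j : ℕ => |y| ^ j) :=
    summable_geometric_of_norm_lt_one (by rwa [Real.norm_eq_abs, abs_abs])
  apply Summable.of_norm_bounded ((hgeo.mul_left (|α - 1| * |y| ^ 2)))
  intro j
  have hwpos := w_pos hα hα2 j
  have hwle : w α j ≤ 1 := (w_le hα hα2 j).trans (by linarith)
  rw [Real.norm_eq_abs, abs_mul, abs_mul, abs_pow]
  have : |α - 1| * w α j * |y| ^ (j + 2) ≤ |α - 1| * 1 * |y| ^ (j + 2) := by
    apply mul_le_mul_of_nonneg_right _ (by positivity)
    exact mul_le_mul_of_nonneg_left hwle (abs_nonneg _)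
  calc |α - 1| * |w α j| * |y| ^ (j + 2)
      = |α - 1| * w α j * |y| ^ (j + 2) := by rw [abs_of_pos hwpos]
    _ ≤ |α - 1| * 1 * |y| ^ (j + 2) := this
    _ = |α - 1| * |y| ^ 2 * |y| ^ j := by ring

lemma S_hasDerivAt (hα : 0 < α) (hα2 : α < 2) {r : ℝ} (hr0 : 0 < r) (hr1 : r < 1)
    {y : ℝ} (hy : y ∈ Set.Ioo (-r) r) :
    HasDerivAt (S α) (∑' j : ℕ, (α - 1) * w α j * ((j:ℝ) + 2) * y ^ (j + 1)) y := by
  have habs : |r| < 1 := by rwa [abs_of_pos hr0]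
  have hu : Summable (fun j : ℕ => |α - 1| * (((j:ℝ) + 2) * r ^ (j + 1))) :=
    (summable_aux habs).mul_left _
  have h := hasDerivAt_tsum_of_isPreconnected (F := ℝ)
    (u := fun j : ℕ => |α - 1| * (((j:ℝ) + 2) * r ^ (j + 1)))
    (g := fun (j : ℕ) (t : ℝ) => (α - 1) * w α j * t ^ (j + 2))
    (g' := fun (j : ℕ) (z : ℝ) => (α - 1) * w α j * ((j:ℝ) + 2) * z ^ (j + 1))
    (y₀ := 0) (y := y) (t := Set.Ioo (-r) r)
    hu isOpen_Ioo (convex_Ioo _ _).isPreconnected ?_ ?_ ?_ ?_ hy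
  · exact h
  · intro j z _
    have hp := hasDerivAt_pow (j + 2) z
    have hp2 := hp.const_mul ((α - 1) * w α j)
    convert hp2 using 1
    · rfl
    push_cast
    ring_nf
  · intro j z hz
    have hzr : |z| ≤ r := (abs_lt.mpr ⟨hz.1, hz.2⟩).le
    exact g'_bound hα hα2 hzr j
  · exact ⟨by linarith, hr0⟩
  · apply summable_zero.congr
    intro j
    simp

lemma key_identity (hα : 0 < α) (hα2 : α < 2) {y : ℝ} (hy : |y| < 1) :
    (1 - y) * (-α + ∑' j : ℕ, (α - 1) * w α j * ((j:ℝ) + 2) * y ^ (j + 1))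
      + α * (1 - α * y + S α y) = 0 := by
  set D := ∑' j : ℕ, (α - 1) * w α j * ((j:ℝ) + 2) * y ^ (j + 1) with hD
  have Sg' := summable_g' hα hα2 hy
  have Sg := summable_g hα hα2 hy
  -- compute the shifted sum
  have hshift : HasSum
      (fun j : ℕ => y * ((α - 1) * w α j * ((j:ℝ) + 2) * y ^ (j + 1))
        - α * ((α - 1) * w α j * y ^ (j + 2))) (y * D - α * S α y) :=
    (Sg'.hasSum.mul_left y).sub (Sg.hasSum.mul_left α)
  have hcongr : ∀ j : ℕ,
      (α - 1) * w α (j + 1) * (((j + 1 : ℕ):ℝ) + 2) * y ^ (j + 1 + 1)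
        = y * ((α - 1) * w α j * ((j:ℝ) + 2) * y ^ (j + 1))
          - α * ((α - 1) * w α j * y ^ (j + 2)) := by
    intro j
    have hc : ((j + 1 : ℕ):ℝ) + 2 = (j:ℝ) + 3 := by push_cast; ring
    calc (α - 1) * w α (j + 1) * (((j + 1 : ℕ):ℝ) + 2) * y ^ (j + 1 + 1)
        = (α - 1) * (w α (j + 1) * ((j:ℝ) + 3)) * y ^ (j + 2) := by rw [hc]; ring
      _ = (α - 1) * (w α j * ((j:ℝ) + 2 - α)) * y ^ (j + 2) := by rw [w_rec hα2 j]
      _ = _ := by ring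
  have hzero : D = (α - 1) * w α 0 * (((0:ℕ):ℝ) + 2) * y ^ (0 + 1)
      + ∑' j : ℕ, (α - 1) * w α (j + 1) * (((j + 1 : ℕ):ℝ) + 2) * y ^ (j + 1 + 1) := by
    rw [hD]
    exact Summable.tsum_eq_zero_add Sg'
  have htail : ∑' j : ℕ, (α - 1) * w α (j + 1) * (((j + 1 : ℕ):ℝ) + 2) * y ^ (j + 1 + 1)
      = y * D - α * S α y := by
    rw [tsum_congr hcongr]
    exact hshift.tsum_eq
  have hfirst : (α - 1) * w α 0 * (((0:ℕ):ℝ) + 2) * y ^ (0 + 1) = α * (α - 1) * y := by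
    rw [w_zero hα hα2]
    simp only [Nat.cast_zero]
    ring
  have hDeq : D = α * (α - 1) * y + (y * D - α * S α y) := by
    conv_lhs => rw [hzero, htail, hfirst]
  linear_combination hDeq

end Stmt5Aux
theorem stmt_5 (α : ℝ) (hα : α ∈ Set.Ioo (0:ℝ) 2) (hα1 : α ≠ 1) (η : ℕ → ℝ)
    (hη : ∀ j : ℕ, 1 ≤ j →
      η j = α / Real.Gamma (2 - α) * (Real.Gamma ((j : ℝ) - α + 1) / Real.Gamma ((j : ℝ) + 2))) :
    (∀ j : ℕ, 1 ≤ j → 0 ≤ η j) ∧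
    (∑' j : ℕ, η (j + 1)) = 1 ∧
    ∀ s ∈ Set.Ioo (0:ℝ) 1,
      (∑' j : ℕ, η (j + 1) * s ^ (j + 1)) =
        1 + ((1 - s) ^ α - (1 - s)) / ((α - 1) * s) := by
  obtain ⟨hα0, hα2⟩ := hα
  have hηw : ∀ j : ℕ, η (j + 1) = Stmt5Aux.w α j := by
    intro j
    rw [hη (j + 1) (by omega)]
    unfold Stmt5Aux.w
    have h1 : ((j + 1 : ℕ):ℝ) - α + 1 = (j:ℝ) + 2 - α := by push_cast; ring
    have h2 : ((j + 1 : ℕ):ℝ) + 2 = (j:ℝ) + 3 := by push_cast; ring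
    rw [h1, h2]
  refine ⟨?_, ?_, ?_⟩
  · -- nonnegativity
    intro j hj
    rw [hη j hj]
    have hj1 : (1:ℝ) ≤ (j:ℝ) := by exact_mod_cast hj
    have h1 : 0 < Real.Gamma (2 - α) := Real.Gamma_pos_of_pos (by linarith)
    have h2 : 0 < Real.Gamma ((j:ℝ) - α + 1) := Real.Gamma_pos_of_pos (by linarith)
    have h3 : 0 < Real.Gamma ((j:ℝ) + 2) := Real.Gamma_pos_of_pos (by linarith)
    positivity
  · -- total mass 1
    rw [tsum_congr hηw]
    exact (Stmt5Aux.hasSum_w hα0 hα2).tsum_eq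
  · -- generating function
    intro s hs
    obtain ⟨hs0, hs1⟩ := hs
    set r : ℝ := (1 + s) / 2 with hrdef
    have hr0 : 0 < r := by rw [hrdef]; linarith
    have hrs : s < r := by rw [hrdef]; linarith
    have hr1 : r < 1 := by rw [hrdef]; linarith
    -- derivative of Φ vanishes on [0, s]
    have hΦd : ∀ y ∈ Set.Icc (0:ℝ) s,
        HasDerivAt (fun t => (1 - α * t + Stmt5Aux.S α t) * (1 - t) ^ (-α)) 0 y := by
      intro y hy
      have hyT : y ∈ Set.Ioo (-r) r :=
        ⟨lt_of_lt_of_le (by linarith) hy.1, lt_of_le_of_lt hy.2 hrs⟩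
      have hy1 : y < 1 := lt_of_le_of_lt hy.2 hs1
      have h1y : 0 < 1 - y := by linarith
      have hyabs : |y| < 1 := abs_lt.mpr ⟨by linarith [hyT.1], hy1⟩
      set D : ℝ := ∑' j : ℕ, (α - 1) * Stmt5Aux.w α j * ((j:ℝ) + 2) * y ^ (j + 1) with hDdef
      have hd1 : HasDerivAt (fun t => 1 - α * t + Stmt5Aux.S α t) (-α + D) y := by
        have ha : HasDerivAt (fun t : ℝ => 1 - α * t) (-α) y := by
          have := ((hasDerivAt_id y).const_mul α).const_sub (1:ℝ)
          simpa using this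
        exact ha.add (Stmt5Aux.S_hasDerivAt hα0 hα2 hr0 hr1 hyT)
      have hd2 : HasDerivAt (fun t : ℝ => (1 - t) ^ (-α)) (α * (1 - y) ^ (-α - 1)) y := by
        have hbase : HasDerivAt (fun t : ℝ => 1 - t) (-1) y := by
          simpa using (hasDerivAt_id y).const_sub (1:ℝ)
        have h := hbase.rpow_const (p := -α) (Or.inl h1y.ne')
        convert h using 1
        ring
      have hmul := hd1.mul hd2
      have hsplit : (1 - y) ^ (-α) = (1 - y) * (1 - y) ^ (-α - 1) := by
        have h := Real.rpow_add h1y 1 (-α - 1)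
        rw [Real.rpow_one] at h
        rw [show (1:ℝ) + (-α - 1) = -α by ring] at h
        exact h
      have hkey := Stmt5Aux.key_identity hα0 hα2 hyabs
      rw [← hDdef] at hkey
      have hzero : (-α + D) * (1 - y) ^ (-α)
          + (1 - α * y + Stmt5Aux.S α y) * (α * (1 - y) ^ (-α - 1)) = 0 := by
        rw [hsplit]
        linear_combination (1 - y) ^ (-α - 1) * hkey
      rwa [hzero] at hmul
    -- Φ is constant on [0, s]
    have hdiff : DifferentiableOn ℝ
        (fun t => (1 - α * t + Stmt5Aux.S α t) * (1 - t) ^ (-α)) (Set.Icc 0 s) :=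
      fun x hx => (hΦd x hx).differentiableAt.differentiableWithinAt
    have hderiv : ∀ x ∈ Set.Ico (0:ℝ) s,
        derivWithin (fun t => (1 - α * t + Stmt5Aux.S α t) * (1 - t) ^ (-α))
          (Set.Icc 0 s) x = 0 := by
      intro x hx
      have hx' : x ∈ Set.Icc (0:ℝ) s := ⟨hx.1, hx.2.le⟩
      exact (hΦd x hx').hasDerivWithinAt.derivWithin ((uniqueDiffOn_Icc hs0) x hx')
    have hconst := constant_of_derivWithin_zero hdiff hderiv s (Set.right_mem_Icc.mpr hs0.le)
    have hS0 : Stmt5Aux.S α 0 = 0 := by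
      unfold Stmt5Aux.S
      calc (∑' j : ℕ, (α - 1) * Stmt5Aux.w α j * (0:ℝ) ^ (j + 2))
          = ∑' _ : ℕ, (0:ℝ) := tsum_congr fun j => by simp
        _ = 0 := tsum_zero
    have hΦ0 : (1 - α * (0:ℝ) + Stmt5Aux.S α 0) * ((1:ℝ) - 0) ^ (-α) = 1 := by
      rw [hS0]
      norm_num
    rw [hΦ0] at hconst
    have h1s : 0 < 1 - s := by linarith
    have hGs : 1 - α * s + Stmt5Aux.S α s = (1 - s) ^ α := by
      have hmul1 : (1 - s) ^ (-α) * (1 - s) ^ α = 1 := by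
        rw [← Real.rpow_add h1s]
        simp
      calc 1 - α * s + Stmt5Aux.S α s
          = (1 - α * s + Stmt5Aux.S α s) * ((1 - s) ^ (-α) * (1 - s) ^ α) := by
            rw [hmul1, mul_one]
        _ = ((1 - α * s + Stmt5Aux.S α s) * (1 - s) ^ (-α)) * (1 - s) ^ α := by ring
        _ = 1 * (1 - s) ^ α := by rw [hconst]
        _ = (1 - s) ^ α := one_mul _
    have hSrel : Stmt5Aux.S α s = ((α - 1) * s) * ∑' j : ℕ, η (j + 1) * s ^ (j + 1) := by
      unfold Stmt5Aux.S
      rw [← tsum_mul_left]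
      apply tsum_congr
      intro j
      rw [hηw j]
      ring
    have hne : (α - 1) * s ≠ 0 := mul_ne_zero (sub_ne_zero.mpr hα1) hs0.ne'
    have hX : ((α - 1) * s) * (∑' j : ℕ, η (j + 1) * s ^ (j + 1))
        = (1 - s) ^ α - 1 + α * s := by
      rw [← hSrel]
      linarith [hGs]
    field_simp
    linear_combination hX
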